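/- Let E be a real inner product space, τ ≥ 0, L ≥ 0, μ > 0, x₀ ∈ E, and f, F : E → ℝ such that F is convex and Lipschitz with constant L, F(x₀) = f(x₀), and F(w) ≤ f(w) + (τ/2)‖w − x₀‖² for all w ∈ E. If x₁ is a global minimizer of x ↦ F(x) + (1/(2μ))‖x − x₀‖², then for every z ∈ E, ‖x₁ − z‖² ≤ ‖x₀ − z‖² − 2μ(f(x₀) − f(z)) + τμ‖x₀ − z‖² + 2μL‖x₁ − x₀‖ + μ²L². -/

import Mathlib

lemma combo_norm_sq {E : Type*} [NormedAddCommGroup E] [InnerProductSpace ℝ E]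
    (a b : E) (t : ℝ) :
    ‖(1 - t) • a + t • b‖ ^ 2
      = (1 - t) * ‖a‖ ^ 2 + t * ‖b‖ ^ 2 - t * (1 - t) * ‖a - b‖ ^ 2 := by
  rw [← real_inner_self_eq_norm_sq, ← real_inner_self_eq_norm_sq,
    ← real_inner_self_eq_norm_sq, ← real_inner_self_eq_norm_sq]
  simp only [inner_add_left, inner_add_right, inner_sub_left, inner_sub_right,
    inner_smul_left, inner_smul_right, RCLike.conj_to_real, real_inner_comm a b]
  ring

/-- One-step distance estimate for the incremental prox-linear update (eq. (4.11)). -/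
theorem prox_linear_step_distance_estimate
    {E : Type*} [NormedAddCommGroup E] [InnerProductSpace ℝ E]
    (τ L : ℝ) (hτ : 0 ≤ τ) (hL : 0 ≤ L)
    (μ : ℝ) (hμ : 0 < μ) (x₀ : E) (f F : E → ℝ)
    (hFc : ConvexOn ℝ Set.univ F)
    (hFl : ∀ x y : E, |F x - F y| ≤ L * ‖x - y‖)
    (hF0 : F x₀ = f x₀)
    (hFapprox : ∀ w : E, F w ≤ f w + τ / 2 * ‖w - x₀‖ ^ 2)
    (x₁ : E)
    (hx₁ : ∀ x : E, F x₁ + 1 / (2 * μ) * ‖x₁ - x₀‖ ^ 2 ≤ F x + 1 / (2 * μ) * ‖x - x₀‖ ^ 2) :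
    ∀ z : E, ‖x₁ - z‖ ^ 2 ≤ ‖x₀ - z‖ ^ 2 - 2 * μ * (f x₀ - f z) + τ * μ * ‖x₀ - z‖ ^ 2
      + 2 * μ * L * ‖x₁ - x₀‖ + μ ^ 2 * L ^ 2 := by
  intro z
  set A := ‖x₁ - x₀‖ ^ 2 with hA
  set B := ‖z - x₀‖ ^ 2 with hB
  set C := ‖z - x₁‖ ^ 2 with hC
  -- key inequality for minimizer of strongly convex function
  have key : F x₁ - F z ≤ (B - A - C) / (2 * μ) := by
    apply le_of_forall_pos_le_add
    intro ε hε
    set t : ℝ := min 1 (ε * (2 * μ) / (C + 1)) with ht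
    have hC0 : 0 ≤ C := sq_nonneg _
    have ht0 : 0 < t := by
      apply lt_min one_pos
      positivity
    have ht1 : t ≤ 1 := min_le_left _ _
    have hstep := hx₁ ((1 - t) • x₁ + t • z)
    have hconv := hFc.2 (Set.mem_univ x₁) (Set.mem_univ z)
      (by linarith : (0:ℝ) ≤ 1 - t) (le_of_lt ht0) (by ring)
    have hnc : ‖((1 - t) • x₁ + t • z) - x₀‖ ^ 2
        = (1 - t) * A + t * B - t * (1 - t) * C := by
      have h1 : ((1 - t) • x₁ + t • z) - x₀ = (1 - t) • (x₁ - x₀) + t • (z - x₀) := by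
        module
      have h2 : (x₁ - x₀) - (z - x₀) = x₁ - z := by abel
      rw [h1, combo_norm_sq, h2, hA, hB, hC, ← norm_neg (x₁ - z)]
      simp
    -- combine
    have hμ' : 0 < 2 * μ := by linarith
    have hdiv : F x₁ - F z ≤ (B - A - C) / (2 * μ) + t * C / (2 * μ) := by
      rw [← add_div, le_div_iff₀ hμ']
      have hsmul : (1 - t) • F x₁ + t • F z = (1 - t) * F x₁ + t * F z := rfl
      rw [hsmul] at hconv
      have h3 : F x₁ + 1 / (2 * μ) * A ≤
          (1 - t) * F x₁ + t * F z + 1 / (2 * μ) * ((1 - t) * A + t * B - t * (1 - t) * C) := by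
        calc F x₁ + 1 / (2 * μ) * A ≤ _ := hstep
          _ ≤ _ := by rw [hnc]; linarith
      have h4 : t * (F x₁ - F z) ≤ 1 / (2 * μ) * (t * (B - A - C) + t * t * C) := by
        nlinarith
      have h5 : t * ((F x₁ - F z) * (2 * μ)) ≤ t * (B - A - C + t * C) := by
        calc t * ((F x₁ - F z) * (2 * μ)) = (t * (F x₁ - F z)) * (2 * μ) := by ring
          _ ≤ (1 / (2 * μ) * (t * (B - A - C) + t * t * C)) * (2 * μ) := by
              exact mul_le_mul_of_nonneg_right h4 (le_of_lt hμ')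
          _ = t * (B - A - C + t * C) := by field_simp
      exact le_of_mul_le_mul_left h5 ht0
    have htC : t * C / (2 * μ) ≤ ε := by
      have h6 : t ≤ ε * (2 * μ) / (C + 1) := min_le_right _ _
      rw [div_le_iff₀ hμ']
      calc t * C ≤ (ε * (2 * μ) / (C + 1)) * C := by
            exact mul_le_mul_of_nonneg_right h6 hC0
        _ ≤ ε * (2 * μ) := by
            rw [div_mul_eq_mul_div, div_le_iff₀ (by linarith : (0:ℝ) < C + 1)]
            nlinarith
    linarith
  -- now use Lipschitz and approximation bounds
  have hlip : f x₀ - L * ‖x₁ - x₀‖ ≤ F x₁ := by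
    have h := (abs_le.mp (hFl x₀ x₁)).2
    rw [norm_sub_rev, hF0] at h
    linarith
  have happ : F z ≤ f z + τ / 2 * B := hFapprox z
  have hkey2 : C ≤ B - A - 2 * μ * (F x₁ - F z) := by
    have h := (le_div_iff₀ (by linarith : (0:ℝ) < 2 * μ)).mp key
    linarith
  have hCeq : ‖x₁ - z‖ ^ 2 = C := by rw [hC, ← norm_neg (x₁ - z)]; simp
  have hBeq : ‖x₀ - z‖ ^ 2 = B := by rw [hB, ← norm_neg (x₀ - z)]; simp
  rw [hCeq, hBeq]
  have hA0 : 0 ≤ A := sq_nonneg _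
  nlinarith [sq_nonneg (μ * L), mul_le_mul_of_nonneg_left hlip (le_of_lt (by linarith : (0:ℝ) < 2*μ)), mul_le_mul_of_nonneg_left happ (le_of_lt (by linarith : (0:ℝ) < 2*μ))]
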